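/- arXiv:cs/0501074 — 3 statements merged into one kernel-verified Lean document; each statement's English description precedes it below -/
import Mathlib

section
/- Let A ∈ K^{n×n}, v ∈ K^n, and let P be the minimal polynomial of the sequence (A^i v)_i, of degree k. Suppose there exists an invertible n×n matrix X̄ whose first k rows are (A^{i}v)^T for i = 0,...,k-1. Then X̄ A^T X̄^{-1} is block lower triangular with upper-left k×k block equal to C_P^T, the transpose of the companion matrix of P. Consequently, the characteristic polynomial of A equals P times the characteristic polynomial of the lower-right (n-k)×(n-k) block of X̄ A^T X̄^{-1}. -/
open Polynomial Matrix

lemma my_charpoly_transpose {K : Type*} [CommRing K] {m : Type*} [DecidableEq m] [Fintype m]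
    (M : Matrix m m K) : Mᵀ.charpoly = M.charpoly := by
  have h : charmatrix Mᵀ = (charmatrix M)ᵀ := by
    ext i j
    simp only [charmatrix_apply, transpose_apply]
    rcases eq_or_ne i j with rfl | h
    · simp
    · simp [diagonal_apply_ne _ h, diagonal_apply_ne _ (Ne.symm h)]
  rw [Matrix.charpoly, h, det_transpose, Matrix.charpoly]

lemma companionT_charpoly {K : Type*} [Field K] (P : K[X]) (hP : P.Monic)
    (hk : 0 < P.natDegree) :
    (Matrix.of fun i j : Fin P.natDegree =>
      if (i : ℕ) = P.natDegree - 1 then -(P.coeff (j : ℕ))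
      else if (j : ℕ) = (i : ℕ) + 1 then (1:K) else 0).charpoly = P := by
  have hPne : P ≠ 0 := hP.ne_zero
  set k := P.natDegree with hk'
  let pb := AdjoinRoot.powerBasis hPne
  haveI : Module.Finite K (AdjoinRoot P) := Module.Finite.of_basis pb.basis
  haveI : Module.Free K (AdjoinRoot P) := Module.Free.of_basis pb.basis
  set r := AdjoinRoot.root P with hr
  have haev : Polynomial.aeval r P = 0 := by rw [AdjoinRoot.aeval_eq, AdjoinRoot.mk_self]
  have hrk : r ^ k = ∑ l : Fin k, (-(P.coeff (l : ℕ))) • r ^ (l : ℕ) := by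
    have h0 := Polynomial.aeval_eq_sum_range (R := K) (p := P) r
    rw [haev, Finset.sum_range_succ, ← hk', hP.coeff_natDegree, one_smul] at h0
    have h1 := eq_neg_of_add_eq_zero_right h0.symm
    rw [h1, ← Finset.sum_neg_distrib, ← Fin.sum_univ_eq_sum_range fun i => -(P.coeff i • r ^ i)]
    simp [neg_smul]
  have hmat : LinearMap.toMatrix pb.basis pb.basis (Algebra.lmul K (AdjoinRoot P) r) =
      (Matrix.of fun i j : Fin k =>
        if (i : ℕ) = k - 1 then -(P.coeff (j : ℕ))
        else if (j : ℕ) = (i : ℕ) + 1 then (1:K) else 0)ᵀ := by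
    ext i j
    have hjlt : (j : ℕ) < k := j.isLt
    rw [LinearMap.toMatrix_apply, pb.basis_eq_pow]
    have hgen : pb.gen = r := rfl
    have hfb : (Algebra.lmul K (AdjoinRoot P) r) (pb.gen ^ (j : ℕ)) = r ^ ((j : ℕ) + 1) := by
      rw [hgen]; simp [Algebra.coe_lmul_eq_mul, LinearMap.mul_apply', pow_succ, mul_comm]
    rw [hfb]
    by_cases hj : (j : ℕ) + 1 < k
    · have hb : r ^ ((j : ℕ) + 1) = pb.basis ⟨(j : ℕ) + 1, hj⟩ := by
        rw [pb.basis_eq_pow, hgen]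
      rw [hb, Module.Basis.repr_self, Finsupp.single_apply]
      change _ = (if (j : ℕ) = k - 1 then -(P.coeff (i : ℕ)) else if (i : ℕ) = (j : ℕ) + 1 then (1:K) else 0)
      have hj1 : (j : ℕ) ≠ k - 1 := by omega
      rw [if_neg hj1]
      by_cases h : (i : ℕ) = (j : ℕ) + 1
      · rw [if_pos h, if_pos (Fin.ext h.symm)]
      · rw [if_neg h, if_neg (fun hc => h (by rw [← hc]))]
    · have hj2 : (j : ℕ) = k - 1 := by omega
      have hj1 : (j : ℕ) + 1 = k := by omega
      rw [hj1, hrk]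
      have hsum : (∑ l : Fin k, (-(P.coeff (l : ℕ))) • r ^ (l : ℕ)) =
          ∑ l : Fin k, (-(P.coeff (l : ℕ))) • pb.basis l := by
        refine Finset.sum_congr rfl fun l _ => ?_
        exact congrArg _ (pb.basis_eq_pow l).symm
      rw [hsum]
      change _ = (if (j : ℕ) = k - 1 then -(P.coeff (i : ℕ)) else if (i : ℕ) = (j : ℕ) + 1 then (1:K) else 0)
      rw [if_pos hj2]
      exact congrFun (pb.basis.repr_sum_self fun l => -(P.coeff (l : ℕ))) i
  have hcp : (Matrix.of fun i j : Fin k =>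
      if (i : ℕ) = k - 1 then -(P.coeff (j : ℕ))
      else if (j : ℕ) = (i : ℕ) + 1 then (1:K) else 0).charpoly =
      LinearMap.charpoly (Algebra.lmul K (AdjoinRoot P) r) := by
    rw [← my_charpoly_transpose, ← hmat]
    exact LinearMap.charpoly_toMatrix _ _
  rw [hcp]
  have h1 : minpoly K (Algebra.lmul K (AdjoinRoot P) r) ∣
      LinearMap.charpoly (Algebra.lmul K (AdjoinRoot P) r) :=
    LinearMap.minpoly_dvd_charpoly _
  have hroot0 : Polynomial.aeval r (minpoly K (Algebra.lmul K (AdjoinRoot P) r)) = 0 := by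
    have h2 : Algebra.lmul K (AdjoinRoot P)
        (Polynomial.aeval r (minpoly K (Algebra.lmul K (AdjoinRoot P) r))) = 0 := by
      rw [← Polynomial.aeval_algHom_apply]
      exact minpoly.aeval K _
    have h3 := DFunLike.congr_fun h2 1
    simpa [Algebra.coe_lmul_eq_mul, LinearMap.mul_apply'] using h3
  have h2 : P ∣ minpoly K (Algebra.lmul K (AdjoinRoot P) r) := by
    rw [AdjoinRoot.aeval_eq] at hroot0
    exact AdjoinRoot.mk_eq_zero.mp hroot0
  obtain ⟨q, hq⟩ := h2.trans h1
  have hmono : (LinearMap.charpoly (Algebra.lmul K (AdjoinRoot P) r)).Monic :=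
    LinearMap.charpoly_monic _
  have hqm : q.Monic := hP.of_mul_monic_left (hq ▸ hmono)
  have hdeg : (LinearMap.charpoly (Algebra.lmul K (AdjoinRoot P) r)).natDegree = k := by
    rw [LinearMap.charpoly_natDegree]
    exact pb.finrank.trans rfl
  have hq0 : q.natDegree = 0 := by
    have hnd := Polynomial.natDegree_mul hPne hqm.ne_zero
    rw [← hq, hdeg] at hnd
    omega
  rw [hq, Polynomial.eq_one_of_monic_natDegree_zero hqm hq0, mul_one]

lemma my_charpoly_conj {K : Type*} [Field K] {m : Type*} [DecidableEq m] [Fintype m]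
    (X M : Matrix m m K) (hX : IsUnit X) : (X * M * X⁻¹).charpoly = M.charpoly := by
  have hd : IsUnit X.det := (isUnit_iff_isUnit_det X).mp hX
  have h1 : X * X⁻¹ = 1 := mul_nonsing_inv X hd
  set C' : Matrix m m K →+* Matrix m m K[X] := (Polynomial.C : K →+* K[X]).mapMatrix
  have h1' : C' X * C' X⁻¹ = 1 := by rw [← _root_.map_mul, h1, _root_.map_one]
  have hcomm : Commute (Matrix.scalar m (Polynomial.X : K[X])) (C' X) :=
    scalar_commute _ (fun r' => Commute.all _ r') _
  have key : charmatrix (X * M * X⁻¹) = C' X * charmatrix M * C' X⁻¹ := by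
    simp only [charmatrix]
    rw [Matrix.mul_sub, Matrix.sub_mul]
    congr 1
    · rw [← hcomm.eq, Matrix.mul_assoc, h1', Matrix.mul_one]
    · simp only [RingHom.mapMatrix_apply, C']
      rw [Matrix.map_mul, Matrix.map_mul]
  have h2 : (C' X).det * (C' X⁻¹).det = 1 := by rw [← det_mul, h1', det_one]
  rw [Matrix.charpoly, key, det_mul, det_mul, mul_right_comm, h2, one_mul, Matrix.charpoly]

theorem similarity_block_triangularization (K : Type*) [Field K] (n k : ℕ)
    (hkn : k < n)
    (A : Matrix (Fin n) (Fin n) K) (v : Fin n → K) (P : K[X])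
    (hP : P.Monic) (hann : (Polynomial.aeval A P).mulVec v = 0)
    (hmin : ∀ Q : K[X], Q.Monic → (Polynomial.aeval A Q).mulVec v = 0 →
      P.natDegree ≤ Q.natDegree)
    (hdeg : P.natDegree = k)
    (Xb : Matrix (Fin n) (Fin n) K) (hXb : IsUnit Xb)
    (hrows : ∀ i : Fin n, (i : ℕ) < k → ∀ j, Xb i j = (A ^ (i : ℕ)).mulVec v j) :
    (∀ i j : Fin n, (i : ℕ) < k → k ≤ (j : ℕ) → (Xb * Aᵀ * Xb⁻¹) i j = 0) ∧
    (∀ i j : Fin n, (hi : (i : ℕ) < k) → (hj : (j : ℕ) < k) →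
      (Xb * Aᵀ * Xb⁻¹) i j =
        (if (i : ℕ) = k - 1 then -(P.coeff (j : ℕ))
         else if (j : ℕ) = (i : ℕ) + 1 then 1 else 0)) ∧
    A.charpoly = P *
      (Matrix.of fun (i j : Fin (n - k)) =>
        (Xb * Aᵀ * Xb⁻¹) ⟨k + (i : ℕ), by omega⟩ ⟨k + (j : ℕ), by omega⟩).charpoly := by
  subst hdeg
  set k := P.natDegree with hk'
  have hdet : IsUnit Xb.det := (Matrix.isUnit_iff_isUnit_det Xb).mp hXb
  have hXinv : Xb * Xb⁻¹ = 1 := Matrix.mul_nonsing_inv Xb hdet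
  -- rows of Xb * Aᵀ
  have hXA : ∀ i : Fin n, (i : ℕ) < k → ∀ j, (Xb * Aᵀ) i j = (A ^ ((i : ℕ) + 1)).mulVec v j := by
    intro i hi j
    rw [Matrix.mul_apply, pow_succ', ← Matrix.mulVec_mulVec]
    simp only [Matrix.mulVec, dotProduct, transpose_apply]
    refine Finset.sum_congr rfl fun l _ => ?_
    rw [hrows i hi l]
    simp only [Matrix.mulVec, dotProduct]
    ring
  -- the annihilation relation
  have hAk : ∀ m, (A ^ k).mulVec v m =
      ∑ l : Fin k, -(P.coeff (l : ℕ)) * (A ^ (l : ℕ)).mulVec v m := by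
    have h0 : (∑ i ∈ Finset.range (k + 1), P.coeff i • A ^ i).mulVec v = 0 := by
      rw [← Polynomial.aeval_eq_sum_range]
      exact hann
    have h1 : ∀ m, ∑ i ∈ Finset.range (k + 1), P.coeff i • ((A ^ i).mulVec v) m = 0 := by
      intro m
      have hcf := congrFun h0 m
      simp only [Matrix.mulVec, dotProduct, Finset.sum_apply, Matrix.sum_apply, Matrix.smul_apply,
        smul_eq_mul, Finset.sum_mul, Pi.zero_apply] at hcf
      rw [Finset.sum_comm] at hcf
      rw [← hcf]
      refine Finset.sum_congr rfl fun i _ => ?_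
      simp only [smul_eq_mul, Matrix.mulVec, dotProduct, Finset.mul_sum]
      exact Finset.sum_congr rfl fun l _ => by ring
    intro m
    have h2 := h1 m
    rw [Finset.sum_range_succ, hP.coeff_natDegree, one_smul] at h2
    have h3 : (A ^ k).mulVec v m = -∑ i ∈ Finset.range k, P.coeff i • ((A ^ i).mulVec v) m :=
      eq_neg_of_add_eq_zero_right h2
    rw [h3, ← Finset.sum_neg_distrib,
      ← Fin.sum_univ_eq_sum_range fun i => -(P.coeff i • ((A ^ i).mulVec v) m)]
    simp [smul_eq_mul]
  -- key entry formula
  have hM : ∀ i : Fin n, (i : ℕ) < k → ∀ j : Fin n,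
      (Xb * Aᵀ * Xb⁻¹) i j =
        if (i : ℕ) + 1 < k then (if (j : ℕ) = (i : ℕ) + 1 then 1 else 0)
        else if (j : ℕ) < k then -(P.coeff (j : ℕ)) else 0 := by
    intro i hi j
    rw [Matrix.mul_apply]
    by_cases h : (i : ℕ) + 1 < k
    · rw [if_pos h]
      have hrow : ∀ m, (Xb * Aᵀ) i m = Xb ⟨(i : ℕ) + 1, h.trans hkn⟩ m := by
        intro m
        rw [hXA i hi m, ← hrows ⟨(i : ℕ) + 1, h.trans hkn⟩ h m]
      calc ∑ m, (Xb * Aᵀ) i m * Xb⁻¹ m j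
          = ∑ m, Xb ⟨(i : ℕ) + 1, h.trans hkn⟩ m * Xb⁻¹ m j :=
            Finset.sum_congr rfl fun m _ => by rw [hrow m]
        _ = (Xb * Xb⁻¹) ⟨(i : ℕ) + 1, h.trans hkn⟩ j := (Matrix.mul_apply).symm
        _ = (1 : Matrix (Fin n) (Fin n) K) ⟨(i : ℕ) + 1, h.trans hkn⟩ j := by rw [hXinv]
        _ = if (j : ℕ) = (i : ℕ) + 1 then 1 else 0 := by
            rw [Matrix.one_apply]
            by_cases hj : (j : ℕ) = (i : ℕ) + 1
            · rw [if_pos hj, if_pos (Fin.ext hj.symm)]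
            · rw [if_neg hj, if_neg (fun hc => hj (by rw [← hc]))]
    · rw [if_neg h]
      have hik : (i : ℕ) + 1 = k := by omega
      have hrow : ∀ m, (Xb * Aᵀ) i m =
          ∑ l : Fin k, -(P.coeff (l : ℕ)) * Xb ⟨(l : ℕ), l.isLt.trans hkn⟩ m := by
        intro m
        rw [hXA i hi m, hik, hAk m]
        refine Finset.sum_congr rfl fun l _ => ?_
        rw [hrows ⟨(l : ℕ), l.isLt.trans hkn⟩ l.isLt m]
      calc ∑ m, (Xb * Aᵀ) i m * Xb⁻¹ m j
          = ∑ m, (∑ l : Fin k, -(P.coeff (l : ℕ)) * Xb ⟨(l : ℕ), l.isLt.trans hkn⟩ m) * Xb⁻¹ m j :=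
            Finset.sum_congr rfl fun m _ => by rw [hrow m]
        _ = ∑ l : Fin k, -(P.coeff (l : ℕ)) * ∑ m, Xb ⟨(l : ℕ), l.isLt.trans hkn⟩ m * Xb⁻¹ m j := by
            simp_rw [Finset.sum_mul, Finset.mul_sum]
            rw [Finset.sum_comm]
            exact Finset.sum_congr rfl fun l _ => Finset.sum_congr rfl fun m _ => by ring
        _ = ∑ l : Fin k, -(P.coeff (l : ℕ)) *
              (1 : Matrix (Fin n) (Fin n) K) ⟨(l : ℕ), l.isLt.trans hkn⟩ j := by
            refine Finset.sum_congr rfl fun l _ => ?_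
            rw [← Matrix.mul_apply, hXinv]
        _ = if (j : ℕ) < k then -(P.coeff (j : ℕ)) else 0 := by
            by_cases hj : (j : ℕ) < k
            · rw [if_pos hj]
              rw [Finset.sum_eq_single (⟨(j : ℕ), hj⟩ : Fin k)]
              · rw [Matrix.one_apply, if_pos (Fin.ext rfl), mul_one]
              · intro l _ hl
                rw [Matrix.one_apply, if_neg, mul_zero]
                intro hc
                exact hl (Fin.ext (by simpa using congrArg Fin.val hc))
              · intro hmem
                exact absurd (Finset.mem_univ _) hmem
            · rw [if_neg hj]
              refine Finset.sum_eq_zero fun l _ => ?_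
              rw [Matrix.one_apply, if_neg, mul_zero]
              intro hc
              have := congrArg Fin.val hc
              simp at this
              omega
  -- conjunct 1
  have hC1 : ∀ i j : Fin n, (i : ℕ) < k → k ≤ (j : ℕ) → (Xb * Aᵀ * Xb⁻¹) i j = 0 := by
    intro i j hi hj
    rw [hM i hi j]
    by_cases h : (i : ℕ) + 1 < k
    · rw [if_pos h, if_neg (by omega)]
    · rw [if_neg h, if_neg (by omega)]
  -- conjunct 2
  have hC2 : ∀ i j : Fin n, (i : ℕ) < k → (j : ℕ) < k →
      (Xb * Aᵀ * Xb⁻¹) i j =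
        (if (i : ℕ) = k - 1 then -(P.coeff (j : ℕ))
         else if (j : ℕ) = (i : ℕ) + 1 then 1 else 0) := by
    intro i j hi hj
    rw [hM i hi j]
    by_cases h : (i : ℕ) + 1 < k
    · rw [if_pos h, if_neg (show (i : ℕ) ≠ k - 1 by omega)]
    · rw [if_neg h, if_pos hj, if_pos (show (i : ℕ) = k - 1 by omega)]
  refine ⟨hC1, fun i j hi hj => hC2 i j hi hj, ?_⟩
  -- charpoly part
  have hnk : k + (n - k) = n := by omega
  let e : Fin k ⊕ Fin (n - k) ≃ Fin n := finSumFinEquiv.trans (finCongr hnk)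
  have hval : ∀ x : Fin k ⊕ Fin (n - k), (((e x) : Fin n) : ℕ) =
      Sum.elim (fun a : Fin k => (a : ℕ)) (fun a : Fin (n - k) => k + (a : ℕ)) x := by
    rintro (a | a)
    · simp [e, finSumFinEquiv_apply_left]
    · simp [e, finSumFinEquiv_apply_right]
  let T : Matrix (Fin k) (Fin k) K := Matrix.of fun i j : Fin k =>
    if (i : ℕ) = k - 1 then -(P.coeff (j : ℕ)) else if (j : ℕ) = (i : ℕ) + 1 then (1:K) else 0
  let D : Matrix (Fin (n - k)) (Fin (n - k)) K := Matrix.of fun i j =>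
    (Xb * Aᵀ * Xb⁻¹) ⟨k + (i : ℕ), by omega⟩ ⟨k + (j : ℕ), by omega⟩
  let B : Matrix (Fin (n - k)) (Fin k) K := Matrix.of fun i j =>
    (Xb * Aᵀ * Xb⁻¹) ⟨k + (i : ℕ), by omega⟩ ⟨(j : ℕ), by omega⟩
  have hblock : (Xb * Aᵀ * Xb⁻¹).submatrix ⇑e ⇑e = Matrix.fromBlocks T 0 B D := by
    ext x y
    rcases x with a | a <;> rcases y with b | b
    · rw [Matrix.submatrix_apply, Matrix.fromBlocks_apply₁₁,
        show e (Sum.inl a) = (⟨(a : ℕ), by omega⟩ : Fin n) from Fin.ext (hval (Sum.inl a)),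
        show e (Sum.inl b) = (⟨(b : ℕ), by omega⟩ : Fin n) from Fin.ext (hval (Sum.inl b))]
      exact hC2 _ _ a.isLt b.isLt
    · rw [Matrix.submatrix_apply, Matrix.fromBlocks_apply₁₂,
        show e (Sum.inl a) = (⟨(a : ℕ), by omega⟩ : Fin n) from Fin.ext (hval (Sum.inl a)),
        show e (Sum.inr b) = (⟨k + (b : ℕ), by omega⟩ : Fin n) from Fin.ext (hval (Sum.inr b))]
      exact hC1 _ _ a.isLt (by simp)
    · rw [Matrix.submatrix_apply, Matrix.fromBlocks_apply₂₁,
        show e (Sum.inr a) = (⟨k + (a : ℕ), by omega⟩ : Fin n) from Fin.ext (hval (Sum.inr a)),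
        show e (Sum.inl b) = (⟨(b : ℕ), by omega⟩ : Fin n) from Fin.ext (hval (Sum.inl b))]
      rfl
    · rw [Matrix.submatrix_apply, Matrix.fromBlocks_apply₂₂,
        show e (Sum.inr a) = (⟨k + (a : ℕ), by omega⟩ : Fin n) from Fin.ext (hval (Sum.inr a)),
        show e (Sum.inr b) = (⟨k + (b : ℕ), by omega⟩ : Fin n) from Fin.ext (hval (Sum.inr b))]
      rfl
  have hTP : T.charpoly = P := by
    rcases Nat.eq_zero_or_pos k with hk0 | hkpos
    · haveI : IsEmpty (Fin k) := ⟨fun a => absurd a.isLt (by omega)⟩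
      have h1 : T.charpoly = 1 := by
        rw [Matrix.charpoly, Matrix.det_isEmpty]
      rw [h1, hP.natDegree_eq_zero.mp (hk'.symm.trans hk0)]
    · exact companionT_charpoly P hP (by omega)
  have hcalc : A.charpoly = P * D.charpoly := by
    calc A.charpoly = Aᵀ.charpoly := (my_charpoly_transpose A).symm
      _ = (Xb * Aᵀ * Xb⁻¹).charpoly := (my_charpoly_conj Xb Aᵀ hXb).symm
      _ = ((Xb * Aᵀ * Xb⁻¹).submatrix ⇑e ⇑e).charpoly := by
          rw [show (Xb * Aᵀ * Xb⁻¹).submatrix ⇑e ⇑e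
              = reindex e.symm e.symm (Xb * Aᵀ * Xb⁻¹) from by
            rw [Matrix.reindex_apply, Equiv.symm_symm], Matrix.charpoly_reindex]
      _ = (Matrix.fromBlocks T 0 B D).charpoly := by rw [hblock]
      _ = T.charpoly * D.charpoly := Matrix.charpoly_fromBlocks_zero₁₂ T B D
      _ = P * D.charpoly := by rw [hTP]
  exact hcalc
end

section
/- Let A ∈ K^{n×n} and suppose the n×n Krylov matrix K_{A,v} (columns v, Av, ..., A^{n-1}v) of some vector v has rank k, and its transpose admits an LSP decomposition K_{A,v}^T = L·S·P with L unit lower triangular, S such that its first k rows S_1 (a k×n matrix in echelon/triangular shape with nonzero pivots) span the row space and its last n−k rows are zero, and P a permutation matrix. Then the row vector m = L_{k+1,1..k} · (L_{1..k,1..k})^{-1} satisfies (A^k v)^T = m · K', where K' is the k×n matrix with rows (A^i v)^T for 0 ≤ i ≤ k−1; hence the minimal polynomial of the sequence (A^i v) is X^k − Σ_{i=0}^{k-1} m_{i+1} X^i. -/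
open Polynomial Matrix

theorem lsp_minpoly (K : Type*) [Field K] (n k : ℕ) (hkn : k < n)
    (A : Matrix (Fin n) (Fin n) K) (v : Fin n → K)
    (Kr : Matrix (Fin n) (Fin n) K)
    (hKr : ∀ i j, Kr i j = (A ^ (j : ℕ)).mulVec v i)
    (hrank : Kr.rank = k)
    (L S : Matrix (Fin n) (Fin n) K) (σ : Equiv.Perm (Fin n))
    (hL1 : ∀ i, L i i = 1)
    (hL0 : ∀ i j : Fin n, (i : ℕ) < (j : ℕ) → L i j = 0)
    (hS0 : ∀ i j : Fin n, k ≤ (i : ℕ) → S i j = 0)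
    (hStri : ∀ i j : Fin n, (j : ℕ) < (i : ℕ) → S i j = 0)
    (hSpiv : ∀ i : Fin n, (i : ℕ) < k → S i i ≠ 0)
    (hLSP : Krᵀ = L * S * σ.permMatrix K)
    (m : Fin k → K)
    (hm : m = Matrix.vecMul (fun j : Fin k => L ⟨k, hkn⟩ (Fin.castLE hkn.le j))
      (Matrix.of fun i j : Fin k => L (Fin.castLE hkn.le i) (Fin.castLE hkn.le j))⁻¹) :
    (∀ j : Fin n, (A ^ k).mulVec v j = ∑ i : Fin k, m i * (A ^ (i : ℕ)).mulVec v j) ∧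
    ((Polynomial.aeval A
        (X ^ k - ∑ i : Fin k, Polynomial.C (m i) * X ^ (i : ℕ))).mulVec v = 0) ∧
    (∀ R : K[X], R.Monic → (Polynomial.aeval A R).mulVec v = 0 → k ≤ R.natDegree) := by
  classical
  set L' : Matrix (Fin k) (Fin k) K :=
    Matrix.of fun i j : Fin k => L (Fin.castLE hkn.le i) (Fin.castLE hkn.le j) with hL'
  set ℓ : Fin k → K := fun j : Fin k => L ⟨k, hkn⟩ (Fin.castLE hkn.le j) with hℓ
  set S' : Matrix (Fin k) (Fin n) K :=
    Matrix.of fun (t : Fin k) (j : Fin n) => (S * σ.permMatrix K) (Fin.castLE hkn.le t) j with hS'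
  -- a helper: mulVec of a sum of matrices
  have mv_sum : ∀ {ι : Type} (t : Finset ι) (f : ι → Matrix (Fin n) (Fin n) K),
      (∑ i ∈ t, f i).mulVec v = ∑ i ∈ t, (f i).mulVec v := by
    intro ι t f
    induction t using Finset.induction_on with
    | empty => simp
    | insert _ _ h ih => rw [Finset.sum_insert h, Finset.sum_insert h, Matrix.add_mulVec, ih]
  -- summation reduction lemma
  have key : ∀ (f : Fin n → K), (∀ t : Fin n, k ≤ (t : ℕ) → f t = 0) →
      ∑ t, f t = ∑ t : Fin k, f (Fin.castLE hkn.le t) := by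
    intro f hf
    have h1 : ∑ t : Fin k, f (Fin.castLE hkn.le t)
        = ∑ x ∈ Finset.univ.map ⟨Fin.castLE hkn.le, Fin.castLE_injective _⟩, f x := by
      rw [Finset.sum_map]; rfl
    rw [h1]
    refine (Finset.sum_subset (Finset.subset_univ _) ?_).symm
    intro x _ hx
    apply hf
    by_contra h
    push_neg at h
    exact hx (Finset.mem_map.mpr ⟨⟨(x : ℕ), h⟩, Finset.mem_univ _, Fin.ext rfl⟩)
  -- row decomposition
  have hrow : ∀ i j : Fin n, Kr j i = ∑ t : Fin k, L i (Fin.castLE hkn.le t) * S' t j := by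
    intro i j
    have h2 := congrFun (congrFun hLSP i) j
    rw [Matrix.transpose_apply] at h2
    rw [h2, Matrix.mul_assoc, Matrix.mul_apply]
    refine key _ ?_
    intro t ht
    have h3 : (S * σ.permMatrix K) t j = 0 := by
      rw [Matrix.mul_apply]
      exact Finset.sum_eq_zero fun u _ => by rw [hS0 t u ht, zero_mul]
    simp [h3]
  -- invertibility of L'
  have hdet : L'.det = 1 := by
    rw [Matrix.det_of_lowerTriangular L' (fun i j h => hL0 _ _ h)]
    exact Finset.prod_eq_one fun i _ => hL1 _
  have hunit : IsUnit L'.det := hdet ▸ isUnit_one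
  have hinvmul : L'⁻¹ * L' = 1 := Matrix.nonsing_inv_mul _ hunit
  -- Part 1
  have part1 : ∀ j : Fin n, (A ^ k).mulVec v j = ∑ i : Fin k, m i * (A ^ (i : ℕ)).mulVec v j := by
    intro j
    have hml : Matrix.vecMul m L' = ℓ := by
      rw [hm, Matrix.vecMul_vecMul, hinvmul, Matrix.vecMul_one]
    calc (A ^ k).mulVec v j = Kr j ⟨k, hkn⟩ := (hKr j ⟨k, hkn⟩).symm
      _ = ∑ t : Fin k, ℓ t * S' t j := hrow _ _
      _ = Matrix.vecMul ℓ S' j := by rw [Matrix.vecMul]; rfl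
      _ = Matrix.vecMul (Matrix.vecMul m L') S' j := by rw [hml]
      _ = Matrix.vecMul m (L' * S') j := by rw [Matrix.vecMul_vecMul]
      _ = ∑ i : Fin k, m i * (L' * S') i j := by rw [Matrix.vecMul]; rfl
      _ = ∑ i : Fin k, m i * (A ^ (i : ℕ)).mulVec v j := by
          refine Finset.sum_congr rfl fun i _ => ?_
          have h7 : (A ^ (i : ℕ)).mulVec v j = Kr j (Fin.castLE hkn.le i) := by
            rw [hKr, Fin.coe_castLE]
          rw [h7, hrow, Matrix.mul_apply]
          rfl
  refine ⟨part1, ?_, ?_⟩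
  · -- Part 2
    funext j
    have haev : (Polynomial.aeval A (X ^ k - ∑ i : Fin k, Polynomial.C (m i) * X ^ (i : ℕ)))
        = A ^ k - ∑ i : Fin k, m i • A ^ (i : ℕ) := by
      rw [map_sub, map_sum, Polynomial.aeval_X_pow]
      congr 1
      refine Finset.sum_congr rfl fun i _ => ?_
      rw [_root_.map_mul, Polynomial.aeval_C, Polynomial.aeval_X_pow, Algebra.smul_def]
    rw [haev, Matrix.sub_mulVec, mv_sum]
    have hsum : (∑ i : Fin k, (m i • A ^ (i : ℕ)).mulVec v) j
        = ∑ i : Fin k, m i * (A ^ (i : ℕ)).mulVec v j := by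
      rw [Finset.sum_apply]
      exact Finset.sum_congr rfl fun i _ => by
        rw [Matrix.smul_mulVec, Pi.smul_apply, smul_eq_mul]
    simp only [Pi.sub_apply, hsum, Pi.zero_apply, part1 j, sub_self]
  · -- Part 3 : minimality
    intro R hR hR0
    by_contra hlt
    push_neg at hlt
    set d := R.natDegree with hd
    set g : Fin d → (Fin n → K) := fun i => (A ^ (i : ℕ)).mulVec v with hg
    set W : Submodule K (Fin n → K) := Submodule.span K (Set.range g) with hW
    -- A^d v ∈ W
    have hAd : (A ^ d).mulVec v ∈ W := by
      have haev : Polynomial.aeval A R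
          = (∑ i ∈ Finset.range d, R.coeff i • A ^ i) + A ^ d := by
        conv_lhs => rw [Polynomial.aeval_eq_sum_range (p := R) (x := A)]
        rw [Finset.sum_range_succ, hR.coeff_natDegree, one_smul]
      have h0 : (∑ i ∈ Finset.range d, R.coeff i • A ^ i).mulVec v
          + (A ^ d).mulVec v = 0 := by
        rw [← Matrix.add_mulVec, ← haev, hR0]
      have h4 : (A ^ d).mulVec v
          = -(∑ i ∈ Finset.range d, R.coeff i • (A ^ i).mulVec v) := by
        rw [eq_neg_iff_add_eq_zero, add_comm, ← h0]
        congr 1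
        rw [mv_sum]
        exact Finset.sum_congr rfl fun i _ => (Matrix.smul_mulVec _ _ _).symm
      rw [h4]
      refine Submodule.neg_mem W (Submodule.sum_mem W fun i hi => ?_)
      refine Submodule.smul_mem W _ (Submodule.subset_span ?_)
      exact ⟨⟨i, Finset.mem_range.mp hi⟩, rfl⟩
    -- W invariant under A
    have hInv : ∀ x ∈ W, A.mulVec x ∈ W := by
      intro x hx
      induction hx using Submodule.span_induction with
      | mem y hy =>
          obtain ⟨i, rfl⟩ := hy
          rw [hg, Matrix.mulVec_mulVec, ← pow_succ']
          rcases Nat.lt_or_ge ((i : ℕ) + 1) d with h | h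
          · exact Submodule.subset_span ⟨⟨(i : ℕ) + 1, h⟩, rfl⟩
          · have h' : (i : ℕ) + 1 = d := le_antisymm i.2 h
            rw [h']; exact hAd
      | zero => rw [Matrix.mulVec_zero]; exact Submodule.zero_mem W
      | add y z _ _ hy hz => rw [Matrix.mulVec_add]; exact Submodule.add_mem W hy hz
      | smul c y _ hy => rw [Matrix.mulVec_smul]; exact Submodule.smul_mem W c hy
    -- all Krylov vectors lie in W
    have hall : ∀ j : ℕ, (A ^ j).mulVec v ∈ W := by
      intro j
      induction j with
      | zero =>
          rcases Nat.eq_zero_or_pos d with h | h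
          · have h5 := hAd; rwa [h] at h5
          · exact Submodule.subset_span ⟨⟨0, h⟩, rfl⟩
      | succ e ih =>
          rw [pow_succ', ← Matrix.mulVec_mulVec]
          exact hInv _ ih
    -- rank bound
    have hspan : Submodule.span K (Set.range Krᵀ) ≤ W := by
      rw [Submodule.span_le]
      rintro x ⟨i, rfl⟩
      have h6 : Krᵀ i = (A ^ (i : ℕ)).mulVec v := by
        funext j; rw [Matrix.transpose_apply, hKr]
      rw [h6]; exact hall i
    have hk : k ≤ Module.finrank K W := by
      rw [← hrank, Matrix.rank_eq_finrank_span_cols]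
      exact Submodule.finrank_mono hspan
    have hWd : Module.finrank K W ≤ d := by
      refine le_trans (finrank_span_le_card (R := K) (Set.range g)) ?_
      rw [Set.toFinset_card]
      exact le_trans (Fintype.card_range_le g) (by simp)
    omega
end

section
/- Let A ∈ K^{n×n} over a field K, and let v_1, ..., v_s ∈ K^n be such that K^n decomposes as a direct sum of the A-invariant subspaces V_j = span{A^i v_j : i ≥ 0}. Let P_j be the minimal polynomial of the sequence (A^i v_j)_i. Then the characteristic polynomial of A equals ∏_{j=1}^s P_j. -/
open Polynomial Matrix

private lemma monic_eq_of_dvd {K : Type*} [Field K] {p q : K[X]} (hp : p.Monic) (hq : q.Monic)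
    (h : p ∣ q) (hdeg : q.natDegree ≤ p.natDegree) : p = q := by
  obtain ⟨c, rfl⟩ := h
  have hc : c ≠ 0 := by rintro rfl; simp [Polynomial.Monic] at hq
  have hp0 : p ≠ 0 := hp.ne_zero
  have : p.natDegree + c.natDegree ≤ p.natDegree := by
    rwa [← Polynomial.natDegree_mul hp0 hc]
  have hc0 : c.natDegree = 0 := by omega
  obtain ⟨a, rfl⟩ := Polynomial.natDegree_eq_zero.mp hc0
  have ha : a = 1 := by
    have := hq.leadingCoeff
    rwa [Polynomial.leadingCoeff_mul, hp.leadingCoeff, one_mul,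
      Polynomial.leadingCoeff_C] at this
  rw [ha, Polynomial.C_1, mul_one]

private lemma aeval_restrict_apply {R M : Type*} [CommRing R] [AddCommGroup M] [Module R M]
    (f : M →ₗ[R] M) {p : Submodule R M} (hf : ∀ x ∈ p, f x ∈ p) (q : R[X]) (x : p) :
    ((Polynomial.aeval (f.restrict hf) q) x : M) = Polynomial.aeval f q x := by
  induction q using Polynomial.induction_on' with
  | add a b ha hb => simp [map_add, ha, hb]
  | monomial k a =>
      rw [aeval_monomial, aeval_monomial]
      simp only [Module.End.mul_apply, Module.algebraMap_end_apply, Module.End.pow_restrict k hf,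
        Submodule.coe_smul, LinearMap.restrict_apply]

private lemma det_blockDiagonal'_eq {α : Type*} [Fintype α] [DecidableEq α] [LinearOrder α]
    {m' : α → Type*} [∀ a, Fintype (m' a)] [∀ a, DecidableEq (m' a)]
    {R : Type*} [CommRing R] (d : ∀ a, Matrix (m' a) (m' a) R) :
    (Matrix.blockDiagonal' d).det = ∏ a, (d a).det := by
  rw [(Matrix.blockTriangular_blockDiagonal' d).det_fintype]
  refine Finset.prod_congr rfl fun a _ => ?_
  let e : m' a ≃ {k : Σ i, m' i // k.fst = a} :=
    { toFun := fun x => ⟨⟨a, x⟩, rfl⟩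
      invFun := fun k => (congrArg m' k.2) ▸ k.1.2
      left_inv := fun x => rfl
      right_inv := by rintro ⟨⟨a', x⟩, rfl⟩; rfl }
  have he : (Matrix.blockDiagonal' d).toSquareBlock Sigma.fst a = (d a).submatrix e.symm e.symm := by
    funext k l
    obtain ⟨⟨a1, x⟩, h1⟩ := k
    obtain ⟨⟨a2, y⟩, h2⟩ := l
    dsimp only at h1 h2
    subst h1; subst h2
    simp [Matrix.toSquareBlock_def, e, Matrix.blockDiagonal'_apply_eq]
  rw [he, Matrix.det_submatrix_equiv_self]

private lemma charpoly_blockDiagonal'_eq {α : Type*} [Fintype α] [DecidableEq α] [LinearOrder α]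
    {m' : α → Type*} [∀ a, Fintype (m' a)] [∀ a, DecidableEq (m' a)]
    {R : Type*} [CommRing R] (d : ∀ a, Matrix (m' a) (m' a) R) :
    (Matrix.blockDiagonal' d).charpoly = ∏ a, (d a).charpoly := by
  have hc : charmatrix (Matrix.blockDiagonal' d) =
      Matrix.blockDiagonal' fun a => charmatrix (d a) := by
    funext k l
    obtain ⟨a1, x⟩ := k
    obtain ⟨a2, y⟩ := l
    by_cases h : a1 = a2
    · subst h
      by_cases hxy : x = y
      · subst hxy
        simp [charmatrix_apply_eq, Matrix.blockDiagonal'_apply_eq]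
      · have hne : (⟨a1, x⟩ : Σ i, m' i) ≠ ⟨a1, y⟩ := by simp [hxy]
        rw [charmatrix_apply_ne _ _ _ hne, Matrix.blockDiagonal'_apply_eq,
          Matrix.blockDiagonal'_apply_eq, charmatrix_apply_ne _ _ _ hxy]
    · have hne : (⟨a1, x⟩ : Σ i, m' i) ≠ ⟨a2, y⟩ := by
        intro hh; exact h (congrArg Sigma.fst hh)
      rw [charmatrix_apply_ne _ _ _ hne, Matrix.blockDiagonal'_apply_ne _ _ _ h,
        Matrix.blockDiagonal'_apply_ne _ _ _ h]
      simp
  rw [Matrix.charpoly, hc, det_blockDiagonal'_eq]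
  rfl

private lemma cyclic_restrict_charpoly {K M : Type*} [Field K] [AddCommGroup M] [Module K M]
    [FiniteDimensional K M]
    (f : Module.End K M) (v : M) (p : K[X]) (hmono : p.Monic)
    (hann : Polynomial.aeval f p v = 0)
    (hmin : ∀ Q : K[X], Q.Monic → Polynomial.aeval f Q v = 0 → p.natDegree ≤ Q.natDegree)
    (V : Submodule K M) (hV : V = Submodule.span K (Set.range fun i : ℕ => (f ^ i) v))
    (hmap : ∀ x ∈ V, f x ∈ V) :
    Nonempty (Module.Basis (Fin p.natDegree) K V) ∧ (f.restrict hmap).charpoly = p := by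
  set d := p.natDegree with hd
  -- if d = 0 then v = 0
  have hd0 : d = 0 → v = 0 := by
    intro h
    have hp1 : p = 1 := hmono.natDegree_eq_zero.mp h
    rw [hp1] at hann
    simpa using hann
  have hgen : ∀ i : ℕ, (f ^ i) v ∈ V := fun i => hV ▸ Submodule.subset_span ⟨i, rfl⟩
  set w : Fin d → M := fun i => (f ^ (i : ℕ)) v with hw
  set W0 : Submodule K M := Submodule.span K (Set.range w) with hW0
  have hsmall : ∀ q : K[X], q.natDegree < d → Polynomial.aeval f q v ∈ W0 := by
    intro q hq
    rw [Polynomial.aeval_eq_sum_range]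
    simp only [LinearMap.sum_apply, LinearMap.smul_apply]
    refine Submodule.sum_mem _ fun i hi => Submodule.smul_mem _ _ ?_
    have hi' : i < d := lt_of_lt_of_le (Finset.mem_range.mp hi) hq
    exact Submodule.subset_span ⟨⟨i, hi'⟩, rfl⟩
  have hfd : (f ^ d) v ∈ W0 := by
    rcases Nat.eq_zero_or_pos d with h0 | hpos
    · rw [h0, pow_zero]
      simpa [hd0 h0] using Submodule.zero_mem W0
    · set g : K[X] := p - X ^ d with hg
      have hgdeg : g.natDegree < d := by
        by_cases hg0 : g = 0
        · rw [hg0]; simpa using hpos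
        · have hdeg : g.degree < p.degree := by
            refine Polynomial.degree_sub_lt ?_ hmono.ne_zero ?_
            · rw [Polynomial.degree_X_pow, Polynomial.degree_eq_natDegree hmono.ne_zero]
            · rw [hmono.leadingCoeff, Polynomial.leadingCoeff_X_pow]
          exact Polynomial.natDegree_lt_natDegree hg0 hdeg
      have hrel : (f ^ d) v = -(Polynomial.aeval f g v) := by
        have hsplit : (f ^ d) v + Polynomial.aeval f g v = 0 := by
          have hp : p = X ^ d + g := by rw [hg]; ring
          rw [hp, map_add, Polynomial.aeval_X_pow, LinearMap.add_apply] at hann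
          exact hann
        exact eq_neg_of_add_eq_zero_left hsplit
      rw [hrel]
      exact Submodule.neg_mem _ (hsmall g hgdeg)
  have hW0f : ∀ x ∈ W0, f x ∈ W0 := by
    intro x hx
    have hle : W0.map f ≤ W0 := by
      rw [hW0, Submodule.map_span_le]
      rintro y ⟨i, rfl⟩
      have hfw : f (w i) = (f ^ ((i : ℕ) + 1)) v := by
        rw [pow_succ']; rfl
      rw [hfw]
      rcases Nat.lt_or_ge ((i : ℕ) + 1) d with h | h
      · exact Submodule.subset_span ⟨⟨(i : ℕ) + 1, h⟩, rfl⟩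
      · have heq : (i : ℕ) + 1 = d := by have := i.isLt; omega
        rw [heq]; exact hfd
    exact hle ⟨x, hx, rfl⟩
  have hall : ∀ i : ℕ, (f ^ i) v ∈ W0 := by
    intro i
    induction i with
    | zero =>
        rcases Nat.eq_zero_or_pos d with h0 | hpos
        · simpa [hd0 h0] using Submodule.zero_mem W0
        · exact Submodule.subset_span ⟨⟨0, hpos⟩, rfl⟩
    | succ i ih =>
        have hstep : (f ^ (i + 1)) v = f ((f ^ i) v) := by rw [pow_succ']; rfl
        rw [hstep]
        exact hW0f _ ih
  have hVW0 : V = W0 := by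
    refine le_antisymm ?_ ?_
    · rw [hV, Submodule.span_le]
      rintro y ⟨i, rfl⟩
      exact hall i
    · rw [hW0, Submodule.span_le]
      rintro y ⟨i, rfl⟩
      exact hgen i
  have li : LinearIndependent K w := by
    rcases Nat.eq_zero_or_pos d with h0 | hpos
    · haveI : IsEmpty (Fin d) := by rw [h0]; infer_instance
      exact linearIndependent_empty_type
    · rw [Fintype.linearIndependent_iff]
      intro c hc
      set Q : K[X] := ∑ i : Fin d, Polynomial.C (c i) * X ^ (i : ℕ) with hQ
      have hQv : Polynomial.aeval f Q v = 0 := by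
        rw [hQ, map_sum]
        simp only [_root_.map_mul, Polynomial.aeval_C, Polynomial.aeval_X_pow,
          LinearMap.sum_apply, Module.End.mul_apply, Module.algebraMap_end_apply]
        exact hc
      have hQdeg : Q.natDegree < d := by
        have : Q.natDegree ≤ d - 1 := by
          refine Polynomial.natDegree_sum_le_of_forall_le _ _ fun i _ => ?_
          refine le_trans (Polynomial.natDegree_C_mul_le _ _) ?_
          rw [Polynomial.natDegree_X_pow]
          omega
        omega
      have hQ0 : Q = 0 := by
        by_contra hne
        have hmon : (Q * Polynomial.C Q.leadingCoeff⁻¹).Monic :=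
          Polynomial.monic_mul_leadingCoeff_inv hne
        have hannQ : Polynomial.aeval f (Q * Polynomial.C Q.leadingCoeff⁻¹) v = 0 := by
          rw [mul_comm, _root_.map_mul]
          simp [Polynomial.aeval_C, Module.End.mul_apply, Module.algebraMap_end_apply, hQv]
        have h1 := hmin _ hmon hannQ
        have h2 : (Q * Polynomial.C Q.leadingCoeff⁻¹).natDegree ≤ Q.natDegree := by
          refine le_trans (Polynomial.natDegree_mul_le) ?_
          simp
        omega
      intro i
      have := congrArg (fun q => Polynomial.coeff q (i : ℕ)) hQ0
      simp only [hQ, Polynomial.finset_sum_coeff, Polynomial.coeff_C_mul,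
        Polynomial.coeff_X_pow, Polynomial.coeff_zero, mul_ite, mul_one, mul_zero] at this
      simp only [Fin.val_eq_val, Finset.sum_ite_eq, Finset.mem_univ, if_true] at this
      exact this
  constructor
  · have bW0 : Module.Basis (Fin d) K (Submodule.span K (Set.range w)) := Module.Basis.span li
    exact ⟨bW0.map (LinearEquiv.ofEq _ _ hVW0.symm)⟩
  · -- charpoly of the restriction
    have bV : Module.Basis (Fin d) K V := (Module.Basis.span li).map (LinearEquiv.ofEq _ _ hVW0.symm)
    have hfr : Module.finrank K V = d := by
      rw [Module.finrank_eq_card_basis bV, Fintype.card_fin]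
    set fj : Module.End K V := f.restrict hmap with hfj
    have hannV : Polynomial.aeval fj p = 0 := by
      have hker : V ≤ LinearMap.ker (Polynomial.aeval f p) := by
        rw [hV, Submodule.span_le]
        rintro y ⟨i, rfl⟩
        have hcomm : Polynomial.aeval f p * f ^ i = f ^ i * Polynomial.aeval f p := by
          rw [show f ^ i = Polynomial.aeval f ((X : K[X]) ^ i) by rw [Polynomial.aeval_X_pow], ← _root_.map_mul, ← _root_.map_mul, mul_comm]
        rw [SetLike.mem_coe, LinearMap.mem_ker, ← Module.End.mul_apply, hcomm,
          Module.End.mul_apply, hann, map_zero]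
      refine LinearMap.ext fun x => Subtype.ext ?_
      rw [LinearMap.zero_apply, ZeroMemClass.coe_zero, hfj, aeval_restrict_apply]
      exact LinearMap.mem_ker.mp (hker x.2)
    have hvV : v ∈ V := by simpa using hgen 0
    have hint : IsIntegral K fj := LinearMap.isIntegral fj
    have hmonic_min : (minpoly K fj).Monic := minpoly.monic hint
    have hannv : Polynomial.aeval f (minpoly K fj) v = 0 := by
      have := aeval_restrict_apply f hmap (minpoly K fj) ⟨v, hvV⟩
      rw [← this, ← hfj, minpoly.aeval]
      rfl
    have hdmin : d ≤ (minpoly K fj).natDegree := hmin _ hmonic_min hannv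
    have hdvdp : minpoly K fj ∣ p := minpoly.dvd K fj hannV
    have hminp : minpoly K fj = p := monic_eq_of_dvd hmonic_min hmono hdvdp hdmin
    have hdvdc : minpoly K fj ∣ fj.charpoly := LinearMap.minpoly_dvd_charpoly fj
    have hcdeg : fj.charpoly.natDegree = d := by
      rw [fj.charpoly_natDegree, hfr]
    have : minpoly K fj = fj.charpoly :=
      monic_eq_of_dvd hmonic_min fj.charpoly_monic hdvdc (by rw [hcdeg]; exact hdmin)
    rw [← this, hminp]

theorem charpoly_eq_prod_of_cyclic_decomposition (K : Type*) [Field K] (n s : ℕ)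
    (A : Matrix (Fin n) (Fin n) K) (v : Fin s → (Fin n → K))
    (V : Fin s → Submodule K (Fin n → K))
    (hV : ∀ j, V j = Submodule.span K (Set.range fun i : ℕ => (A ^ i).mulVec (v j)))
    (hdirect : DirectSum.IsInternal V)
    (P : Fin s → K[X])
    (hmono : ∀ j, (P j).Monic)
    (hann : ∀ j, (Polynomial.aeval A (P j)).mulVec (v j) = 0)
    (hmin : ∀ j, ∀ Q : K[X], Q.Monic → (Polynomial.aeval A Q).mulVec (v j) = 0 →
      (P j).natDegree ≤ Q.natDegree) :
    A.charpoly = ∏ j, P j := by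
  classical
  set f : Module.End K (Fin n → K) := Matrix.toLinAlgEquiv' A with hf
  have hfa : ∀ (q : K[X]) (x : Fin n → K),
      Polynomial.aeval f q x = (Polynomial.aeval A q).mulVec x := by
    intro q x
    rw [hf, Polynomial.aeval_algHom_apply (Matrix.toLinAlgEquiv' :
      Matrix (Fin n) (Fin n) K ≃ₐ[K] Module.End K (Fin n → K)) A q,
      Matrix.toLinAlgEquiv'_apply]
  have hpow : ∀ (i : ℕ) (x : Fin n → K), (f ^ i) x = (A ^ i).mulVec x := by
    intro i x
    have := hfa ((X : K[X]) ^ i) x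
    simpa using this
  have hV' : ∀ j, V j = Submodule.span K (Set.range fun i : ℕ => (f ^ i) (v j)) := by
    intro j
    rw [hV j]
    congr 1
    ext y
    constructor
    · rintro ⟨i, rfl⟩
      refine ⟨i, ?_⟩
      exact hpow i (v j)
    · rintro ⟨i, rfl⟩
      refine ⟨i, ?_⟩
      exact (hpow i (v j)).symm
  have hmapsTo : ∀ j, ∀ x ∈ V j, f x ∈ V j := by
    intro j x hx
    rw [hV' j] at hx ⊢
    have hle : (Submodule.span K (Set.range fun i : ℕ => (f ^ i) (v j))).map f ≤
        Submodule.span K (Set.range fun i : ℕ => (f ^ i) (v j)) := by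
      rw [Submodule.map_span_le]
      rintro y ⟨i, rfl⟩
      refine Submodule.subset_span ⟨i + 1, ?_⟩
      show (f ^ (i + 1)) (v j) = f ((f ^ i) (v j))
      rw [pow_succ']; rfl
    exact hle ⟨x, hx, rfl⟩
  have hcyc : ∀ j, Nonempty (Module.Basis (Fin (P j).natDegree) K (V j)) ∧
      (f.restrict (hmapsTo j)).charpoly = P j := fun j =>
    cyclic_restrict_charpoly f (v j) (P j) (hmono j)
      (by rw [hfa]; exact hann j)
      (fun Q hQ hQ0 => hmin j Q hQ (by rw [← hfa]; exact hQ0))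
      (V j) (hV' j) (hmapsTo j)
  let bs : ∀ j, Module.Basis (Fin (P j).natDegree) K (V j) := fun j => (hcyc j).1.some
  let bb := hdirect.collectedBasis bs
  have htm := LinearMap.toMatrix_directSum_collectedBasis_eq_blockDiagonal'
    hdirect hdirect bs bs (f := f) hmapsTo
  have h2 : A.charpoly = f.charpoly := by
    rw [← LinearMap.charpoly_toMatrix f (Pi.basisFun K (Fin n))]
    congr 1
    rw [LinearMap.toMatrix_eq_toMatrix']
    have : f = Matrix.toLin' A :=
      LinearMap.ext fun x => by rw [hf, Matrix.toLinAlgEquiv'_apply, Matrix.toLin'_apply]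
    rw [this, LinearMap.toMatrix'_toLin']
  rw [h2, ← LinearMap.charpoly_toMatrix f bb, htm, charpoly_blockDiagonal'_eq]
  refine Finset.prod_congr rfl fun j _ => ?_
  rw [LinearMap.charpoly_toMatrix]
  exact (hcyc j).2
end
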